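/- Let d be a positive integer and let g : ℂ² → ℂ² be a map satisfying g(G(u,v)) = G(T_d(u), T_d(v)) for all u, v ∈ ℂ, and let C_C = {(p,q) ∈ ℂ² : p³ = q²}. Then: (1) if d ≥ 2, the set {w ∈ C_C : the sequence (gᵏ(w))_{k≥1} is bounded} equals the arc γ₁ = {((1 + 2cos θ)², (1 + 2cos θ)³) : θ ∈ ℝ}; (2) if 3 does not divide d then g(0,0) = (0,0), if 3 divides d then g(0,0) = (9,27), and in all cases g(9,27) = (9,27). -/

import Mathlib

/-- The polynomial parametrization of ℂ²/D₃ ≅ ℂ². -/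
noncomputable def G (u v : ℂ) : ℂ × ℂ :=
  (1 + u * v + v ^ 2, (-2 + u ^ 2 + 6 * v ^ 2 + u * v * (3 + v ^ 2)) / 2)

open Polynomial Complex Bornology Set

private lemma Gpoly (v : ℂ) :
    G (v ^ 3 - 3 * v) v = ((v ^ 2 - 1) ^ 2, (v ^ 2 - 1) ^ 3) := by
  simp only [G, Prod.mk.injEq]
  constructor
  · ring
  · ring

private lemma Gval (s : ℂ) (hs : s ≠ 0) :
    G (s ^ 3 + s⁻¹ ^ 3) (s + s⁻¹) =
      (((s + s⁻¹) ^ 2 - 1) ^ 2, ((s + s⁻¹) ^ 2 - 1) ^ 3) := by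
  have hmul : s * s⁻¹ = 1 := mul_inv_cancel₀ hs
  have hcube : s ^ 3 + s⁻¹ ^ 3 = (s + s⁻¹) ^ 3 - 3 * (s + s⁻¹) := by
    linear_combination (-3 * (s + s⁻¹)) * hmul
  rw [hcube]
  exact Gpoly (s + s⁻¹)

private lemma exists_s (x : ℂ) : ∃ s : ℂ, s ≠ 0 ∧ 1 ≤ ‖s‖ ∧ s + s⁻¹ = x := by
  obtain ⟨c, hc⟩ := IsAlgClosed.exists_pow_nat_eq (x ^ 2 - 4) (n := 2) (by norm_num)
  have hmul : ((x + c) / 2) * ((x - c) / 2) = 1 := by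
    field_simp
    linear_combination -hc
  have h1 : (x + c) / 2 ≠ 0 := by
    intro h
    rw [h, zero_mul] at hmul
    norm_num at hmul
  have h2 : ((x + c) / 2)⁻¹ = (x - c) / 2 := inv_eq_of_mul_eq_one_right hmul
  have hsum : (x + c) / 2 + ((x + c) / 2)⁻¹ = x := by rw [h2]; ring
  by_cases hn : 1 ≤ ‖(x + c) / 2‖
  · exact ⟨_, h1, hn, hsum⟩
  · push_neg at hn
    refine ⟨((x + c) / 2)⁻¹, inv_ne_zero h1, ?_, ?_⟩
    · rw [norm_inv]
      exact one_le_inv_iff₀.mpr ⟨norm_pos_iff.mpr h1, hn.le⟩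
    · rw [inv_inv, add_comm]
      exact hsum

private lemma keyOrbit (d : ℕ) (T : Polynomial ℤ) (g : ℂ × ℂ → ℂ × ℂ)
    (hTn : ∀ s : ℂ, s ≠ 0 → Polynomial.aeval (s + s⁻¹) T = s ^ d + s⁻¹ ^ d)
    (hg : ∀ u v : ℂ, g (G u v) = G (Polynomial.aeval u T) (Polynomial.aeval v T))
    (s : ℂ) (hs : s ≠ 0) (k : ℕ) :
    g^[k] (G (s ^ 3 + s⁻¹ ^ 3) (s + s⁻¹)) =
      (((s ^ (d ^ k) + s⁻¹ ^ (d ^ k)) ^ 2 - 1) ^ 2,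
        ((s ^ (d ^ k) + s⁻¹ ^ (d ^ k)) ^ 2 - 1) ^ 3) := by
  have hGn : ∀ n : ℕ, G (s ^ (3 * n) + s⁻¹ ^ (3 * n)) (s ^ n + s⁻¹ ^ n)
      = (((s ^ n + s⁻¹ ^ n) ^ 2 - 1) ^ 2, ((s ^ n + s⁻¹ ^ n) ^ 2 - 1) ^ 3) := by
    intro n
    have e1 : s ^ (3 * n) = (s ^ n) ^ 3 := by rw [mul_comm, pow_mul]
    have e2 : s⁻¹ ^ (3 * n) = (s ^ n)⁻¹ ^ 3 := by rw [mul_comm, pow_mul, inv_pow]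
    have e3 : s⁻¹ ^ n = (s ^ n)⁻¹ := inv_pow s n
    rw [e1, e2, e3]
    exact Gval (s ^ n) (pow_ne_zero n hs)
  have hTpow : ∀ n : ℕ, Polynomial.aeval (s ^ n + s⁻¹ ^ n) T
      = s ^ (n * d) + s⁻¹ ^ (n * d) := by
    intro n
    have h := hTn (s ^ n) (pow_ne_zero n hs)
    rw [← inv_pow, ← pow_mul, ← pow_mul] at h
    exact h
  have horb : ∀ k : ℕ, g^[k] (G (s ^ 3 + s⁻¹ ^ 3) (s + s⁻¹)) =
      G (s ^ (3 * d ^ k) + s⁻¹ ^ (3 * d ^ k)) (s ^ (d ^ k) + s⁻¹ ^ (d ^ k)) := by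
    intro k
    induction k with
    | zero => simp
    | succ k ih =>
      rw [Function.iterate_succ_apply', ih, hg, hTpow, hTpow, pow_succ, ← mul_assoc]
  rw [horb k, hGn]

private lemma bounded_of_norm_one (s : ℂ) (f : ℕ → ℂ × ℂ) (h1 : ‖s‖ = 1) (m : ℕ → ℕ)
    (key : ∀ k, f k = (((s ^ m k + s⁻¹ ^ m k) ^ 2 - 1) ^ 2,
      ((s ^ m k + s⁻¹ ^ m k) ^ 2 - 1) ^ 3)) :
    IsBounded (Set.range f) := by
  rw [isBounded_iff_forall_norm_le]
  refine ⟨125, ?_⟩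
  rintro x ⟨k, rfl⟩
  rw [key]
  have hb : ‖(s ^ m k + s⁻¹ ^ m k) ^ 2 - 1‖ ≤ 5 := by
    have h2 : ‖s ^ m k + s⁻¹ ^ m k‖ ≤ 2 := by
      calc ‖s ^ m k + s⁻¹ ^ m k‖ ≤ ‖s ^ m k‖ + ‖s⁻¹ ^ m k‖ := norm_add_le _ _
        _ ≤ 2 := by rw [norm_pow, norm_pow, norm_inv, h1]; norm_num
    calc ‖(s ^ m k + s⁻¹ ^ m k) ^ 2 - 1‖
        ≤ ‖(s ^ m k + s⁻¹ ^ m k) ^ 2‖ + ‖(1 : ℂ)‖ := norm_sub_le _ _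
      _ ≤ 2 ^ 2 + 1 := by
          rw [norm_pow, norm_one]
          gcongr
      _ ≤ 5 := by norm_num
  rw [Prod.norm_def]
  have hnn : (0 : ℝ) ≤ ‖(s ^ m k + s⁻¹ ^ m k) ^ 2 - 1‖ := norm_nonneg _
  apply max_le
  · rw [norm_pow]
    exact le_trans (pow_le_pow_left₀ hnn hb 2) (by norm_num)
  · rw [norm_pow]
    exact le_trans (pow_le_pow_left₀ hnn hb 3) (by norm_num)

private lemma unbounded_gen (s : ℂ) (f : ℕ → ℂ × ℂ) (h1 : 1 < ‖s‖) (m : ℕ → ℕ)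
    (hm : ∀ k, k ≤ m k)
    (key : ∀ k, f k = (((s ^ m k + s⁻¹ ^ m k) ^ 2 - 1) ^ 2,
      ((s ^ m k + s⁻¹ ^ m k) ^ 2 - 1) ^ 3)) :
    ¬ IsBounded (Set.range f) := by
  intro hbd
  obtain ⟨C, hC⟩ := isBounded_iff_forall_norm_le.mp hbd
  have hC0 : (0 : ℝ) ≤ C := le_trans (norm_nonneg _) (hC _ ⟨0, rfl⟩)
  obtain ⟨n, hn⟩ := pow_unbounded_of_one_lt (C + 3) h1
  have hfst : ‖((s ^ m n + s⁻¹ ^ m n) ^ 2 - 1) ^ 2‖ ≤ C := by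
    have h := hC _ ⟨n, rfl⟩
    rw [key n, Prod.norm_def] at h
    exact le_trans (le_max_left _ _) h
  set E := m n with hE
  have hX : C + 3 < ‖s‖ ^ E :=
    lt_of_lt_of_le hn (pow_le_pow_right₀ h1.le (hm n))
  set B := s ^ E + s⁻¹ ^ E with hB
  have hinv : ‖s⁻¹ ^ E‖ ≤ 1 := by
    rw [norm_pow, norm_inv]
    exact pow_le_one₀ (by positivity) (inv_le_one_of_one_le₀ h1.le)
  have hBlow : ‖s‖ ^ E - 1 ≤ ‖B‖ := by
    have h := norm_sub_norm_le (s ^ E) (-(s⁻¹ ^ E))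
    rw [sub_neg_eq_add, norm_neg, norm_pow] at h
    linarith
  have hB2 : ‖B‖ ^ 2 - 1 ≤ ‖B ^ 2 - 1‖ := by
    have h := norm_sub_norm_le (B ^ 2) (1 : ℂ)
    rw [norm_pow, norm_one] at h
    linarith
  rw [norm_pow] at hfst
  have ha0 : (0 : ℝ) ≤ ‖B‖ := norm_nonneg _
  have hb0 : (0 : ℝ) ≤ ‖B ^ 2 - 1‖ := norm_nonneg _
  nlinarith [sq_nonneg (‖B‖ - (C + 2)), sq_nonneg (‖B ^ 2 - 1‖ - (C + 1))]

theorem K_set_on_cuspidal_cubic (d : ℕ) (hd : 0 < d) (T : Polynomial ℤ)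
    (hT : ∀ s : ℂ, s ≠ 0 → Polynomial.aeval (s + s⁻¹) T = s ^ (d : ℤ) + s ^ (-(d : ℤ)))
    (g : ℂ × ℂ → ℂ × ℂ)
    (hg : ∀ u v : ℂ, g (G u v) = G (Polynomial.aeval u T) (Polynomial.aeval v T)) :
    (2 ≤ d →
      {w : ℂ × ℂ | w.1 ^ 3 = w.2 ^ 2 ∧
          Bornology.IsBounded (Set.range fun k : ℕ => g^[k + 1] w)}
        = {w : ℂ × ℂ | ∃ θ : ℝ,
            w = ((((1 + 2 * Real.cos θ) : ℝ) : ℂ) ^ 2,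
                 (((1 + 2 * Real.cos θ) : ℝ) : ℂ) ^ 3)}) ∧
    (¬ (3 ∣ d) → g (0, 0) = (0, 0)) ∧
    (3 ∣ d → g (0, 0) = (9, 27)) ∧
    g (9, 27) = (9, 27) := by
  have hTn : ∀ s : ℂ, s ≠ 0 → Polynomial.aeval (s + s⁻¹) T = s ^ d + s⁻¹ ^ d := by
    intro s hs
    have h := hT s hs
    rwa [zpow_neg, zpow_natCast, ← inv_pow] at h
  -- the cos computation
  have bcos : ∀ φ : ℝ, (Complex.exp (φ * I) + (Complex.exp (φ * I))⁻¹) ^ 2 - 1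
      = (((1 + 2 * Real.cos (2 * φ)) : ℝ) : ℂ) := by
    intro φ
    have hsne : Complex.exp (φ * I) ≠ 0 := Complex.exp_ne_zero _
    have hinv : (Complex.exp (φ * I))⁻¹ = Complex.exp (-(φ * I)) := by
      rw [← Complex.exp_neg]
    have hsq : Complex.exp (φ * I) ^ 2 = Complex.exp ((2 * φ : ℝ) * I) := by
      rw [sq, ← Complex.exp_add]
      congr 1
      push_cast
      ring
    have hsqinv : Complex.exp (-(φ * I)) ^ 2 = Complex.exp (-((2 * φ : ℝ) * I)) := by
      rw [sq, ← Complex.exp_add]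
      congr 1
      push_cast
      ring
    have h2cos : 2 * Complex.cos ((2 * φ : ℝ) : ℂ) =
        Complex.exp (((2 * φ : ℝ) : ℂ) * I) + Complex.exp (-((2 * φ : ℝ) : ℂ) * I) :=
      Complex.two_cos _
    have hmul : Complex.exp (φ * I) * Complex.exp (-(φ * I)) = 1 := by
      rw [← Complex.exp_add]
      simp
    rw [hinv]
    have expand : (Complex.exp (φ * I) + Complex.exp (-(φ * I))) ^ 2 - 1
        = Complex.exp (φ * I) ^ 2 + Complex.exp (-(φ * I)) ^ 2
          + 2 * (Complex.exp (φ * I) * Complex.exp (-(φ * I))) - 1 := by ring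
    rw [expand, hmul, hsq, hsqinv]
    rw [neg_mul] at h2cos
    push_cast at h2cos ⊢
    linear_combination -h2cos
  refine ⟨?_, ?_, ?_, ?_⟩
  · -- part 1
    intro hd2
    ext w
    simp only [Set.mem_setOf_eq]
    constructor
    · rintro ⟨hcc, hbd⟩
      -- find t with w = (t², t³)
      obtain ⟨t, ht1, ht2⟩ : ∃ t : ℂ, w.1 = t ^ 2 ∧ w.2 = t ^ 3 := by
        by_cases h0 : w.1 = 0
        · refine ⟨0, by simpa using h0, ?_⟩
          have : w.2 ^ 2 = 0 := by rw [← hcc, h0]; ring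
          have h2 : w.2 = 0 := by
            exact pow_eq_zero_iff (by norm_num) |>.mp this
          simp [h2]
        · have h20 : w.2 ≠ 0 := by
            intro h
            apply h0
            have : w.1 ^ 3 = 0 := by rw [hcc, h]; ring
            exact pow_eq_zero_iff (by norm_num) |>.mp this
          refine ⟨w.2 / w.1, ?_, ?_⟩
          · rw [div_pow, eq_div_iff (pow_ne_zero 2 h0)]
            linear_combination hcc
          · rw [div_pow, eq_div_iff (pow_ne_zero 3 h0)]
            linear_combination w.2 * hcc
      obtain ⟨c, hc⟩ := IsAlgClosed.exists_pow_nat_eq (t + 1) (n := 2) (by norm_num)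
      obtain ⟨s, hsne, hsnorm, hssum⟩ := exists_s c
      have hbt : (s + s⁻¹) ^ 2 - 1 = t := by rw [hssum]; linear_combination hc
      have hw : w = G (s ^ 3 + s⁻¹ ^ 3) (s + s⁻¹) := by
        rw [Gval s hsne, hbt]
        exact Prod.ext ht1 ht2
      have key : ∀ k : ℕ, g^[k + 1] w =
          (((s ^ (d ^ (k + 1)) + s⁻¹ ^ (d ^ (k + 1))) ^ 2 - 1) ^ 2,
            ((s ^ (d ^ (k + 1)) + s⁻¹ ^ (d ^ (k + 1))) ^ 2 - 1) ^ 3) := by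
        intro k
        rw [hw]
        exact keyOrbit d T g hTn hg s hsne (k + 1)
      have hnorm1 : ‖s‖ = 1 := by
        by_contra hne
        have hgt : 1 < ‖s‖ := lt_of_le_of_ne hsnorm (Ne.symm hne)
        exact unbounded_gen s (fun k => g^[k + 1] w) hgt (fun k => d ^ (k + 1))
          (fun k => by
            have h1 : k ≤ 2 ^ k := (Nat.lt_two_pow_self (n := k)).le
            have h2 : (2 : ℕ) ^ k ≤ 2 ^ (k + 1) :=
              Nat.pow_le_pow_right (by norm_num) (Nat.le_succ k)
            have h3 : (2 : ℕ) ^ (k + 1) ≤ d ^ (k + 1) := Nat.pow_le_pow_left hd2 _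
            show k ≤ d ^ (k + 1)
            exact le_trans h1 (le_trans h2 h3))
          key hbd
      obtain ⟨φ, hφ⟩ := (Complex.norm_eq_one_iff s).mp (by exact hnorm1)
      refine ⟨2 * φ, ?_⟩
      rw [hw, Gval s hsne, ← hφ, bcos φ]
    · rintro ⟨θ, rfl⟩
      refine ⟨?_, ?_⟩
      · show ((((1 + 2 * Real.cos θ) : ℝ) : ℂ) ^ 2) ^ 3
            = ((((1 + 2 * Real.cos θ) : ℝ) : ℂ) ^ 3) ^ 2
        ring
      set s := Complex.exp ((θ / 2 : ℝ) * I) with hs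
      have hsne : s ≠ 0 := Complex.exp_ne_zero _
      have hnorm1 : ‖s‖ = 1 := by
        rw [hs]
        exact Complex.norm_exp_ofReal_mul_I _
      have hbc : (s + s⁻¹) ^ 2 - 1 = (((1 + 2 * Real.cos θ) : ℝ) : ℂ) := by
        have := bcos (θ / 2)
        rwa [show 2 * (θ / 2) = θ by ring] at this
      have hw : ((((1 + 2 * Real.cos θ) : ℝ) : ℂ) ^ 2,
          (((1 + 2 * Real.cos θ) : ℝ) : ℂ) ^ 3) = G (s ^ 3 + s⁻¹ ^ 3) (s + s⁻¹) := by
        rw [Gval s hsne, hbc]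
      rw [hw]
      exact bounded_of_norm_one s _ hnorm1 (fun k => d ^ (k + 1))
        (fun k => keyOrbit d T g hTn hg s hsne (k + 1))
  · -- ¬ 3 ∣ d
    intro h3
    obtain ⟨s₀, hs₀ne, _, hs₀sum⟩ := exists_s 1
    have hq : s₀ ^ 2 - s₀ + 1 = 0 := by
      have h := hs₀sum
      field_simp at h
      linear_combination h
    have hc3 : s₀ ^ 3 = -1 := by linear_combination (s₀ + 1) * hq
    have h6 : s₀ ^ 6 = 1 := by linear_combination (s₀ ^ 3 - 1) * hc3
    have hG00 : G (s₀ ^ 3 + s₀⁻¹ ^ 3) (s₀ + s₀⁻¹) = (0, 0) := by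
      rw [Gval s₀ hs₀ne, hs₀sum]
      norm_num
    have gkey := keyOrbit d T g hTn hg s₀ hs₀ne 1
    rw [Function.iterate_one, hG00] at gkey
    simp only [pow_one] at gkey
    have hy : s₀ ^ d ≠ 0 := pow_ne_zero d hs₀ne
    have hA : (s₀ ^ d + s₀⁻¹ ^ d) ^ 2 - 1 = s₀ ^ (2 * d) + (s₀ ^ (2 * d))⁻¹ + 1 := by
      rw [inv_pow, show s₀ ^ (2 * d) = (s₀ ^ d) ^ 2 by rw [mul_comm, pow_mul],
        ← inv_pow, ← inv_pow]
      have hmul : s₀ ^ d * (s₀ ^ d)⁻¹ = 1 := mul_inv_cancel₀ hy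
      linear_combination 2 * hmul
    have hz : s₀ ^ (2 * d) = s₀ ^ (2 * (d % 3)) := by
      conv_lhs => rw [← Nat.div_add_mod d 3]
      rw [show 2 * (3 * (d / 3) + d % 3) = 6 * (d / 3) + 2 * (d % 3) by ring,
        pow_add, pow_mul, h6, one_pow, one_mul]
    have hr : d % 3 = 1 ∨ d % 3 = 2 := by omega
    have hval : s₀ ^ (2 * (d % 3)) + (s₀ ^ (2 * (d % 3)))⁻¹ + 1 = 0 := by
      rcases hr with hr | hr
      · rw [hr]
        norm_num
        have hi : (s₀ ^ 2)⁻¹ = s₀ ^ 4 := by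
          apply inv_eq_of_mul_eq_one_right
          rw [← pow_add]
          exact h6
        rw [hi]
        linear_combination (s₀ ^ 2 + s₀ + 1) * hq
      · rw [hr]
        norm_num
        have hi : (s₀ ^ 4)⁻¹ = s₀ ^ 2 := by
          apply inv_eq_of_mul_eq_one_right
          rw [← pow_add]
          exact h6
        rw [hi]
        linear_combination (s₀ ^ 2 + s₀ + 1) * hq
    rw [hA, hz, hval] at gkey
    simpa using gkey
  · -- 3 ∣ d
    intro h3
    obtain ⟨s₀, hs₀ne, _, hs₀sum⟩ := exists_s 1
    have hq : s₀ ^ 2 - s₀ + 1 = 0 := by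
      have h := hs₀sum
      field_simp at h
      linear_combination h
    have hc3 : s₀ ^ 3 = -1 := by linear_combination (s₀ + 1) * hq
    have h6 : s₀ ^ 6 = 1 := by linear_combination (s₀ ^ 3 - 1) * hc3
    have hG00 : G (s₀ ^ 3 + s₀⁻¹ ^ 3) (s₀ + s₀⁻¹) = (0, 0) := by
      rw [Gval s₀ hs₀ne, hs₀sum]
      norm_num
    have gkey := keyOrbit d T g hTn hg s₀ hs₀ne 1
    rw [Function.iterate_one, hG00] at gkey
    simp only [pow_one] at gkey
    have hy : s₀ ^ d ≠ 0 := pow_ne_zero d hs₀ne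
    have hA : (s₀ ^ d + s₀⁻¹ ^ d) ^ 2 - 1 = s₀ ^ (2 * d) + (s₀ ^ (2 * d))⁻¹ + 1 := by
      rw [inv_pow, show s₀ ^ (2 * d) = (s₀ ^ d) ^ 2 by rw [mul_comm, pow_mul],
        ← inv_pow, ← inv_pow]
      have hmul : s₀ ^ d * (s₀ ^ d)⁻¹ = 1 := mul_inv_cancel₀ hy
      linear_combination 2 * hmul
    obtain ⟨e, he⟩ := h3
    have hz : s₀ ^ (2 * d) = 1 := by
      rw [he, show 2 * (3 * e) = 6 * e by ring, pow_mul, h6, one_pow]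
    rw [hA, hz] at gkey
    norm_num at gkey
    simpa using gkey
  · -- g (9, 27) = (9, 27)
    have hG22 : G 2 2 = (9, 27) := by
      simp only [G, Prod.mk.injEq]
      norm_num
    have ha2 : Polynomial.aeval (2 : ℂ) T = 2 := by
      have h := hTn 1 one_ne_zero
      norm_num at h
      exact h
    rw [← hG22, hg, ha2, hG22]
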